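/- Let D ≥ 1, Δ ≥ 1 and ε > 0 be real numbers, and let (C_j)_{j≥1} be a nonincreasing sequence of nonnegative real numbers such that C_1 ≤ Δ and C_{j+1} ≤ C_j·(1 − 1/(j·D·Δ)) for every j ≥ 1 with C_j > ε·D. Then C_{t+1} ≤ ε·D for every integer t ≥ max((Δ/(ε·D))^{D·Δ}, 1); moreover C_{t+1} ≤ Δ·t^{−1/(D·Δ)} for every integer t ≥ 1 for which C_1, …, C_t all exceed ε·D. -/

import Mathlib

open Classical

/-- Binary decision trees over inputs in `Fin n → Bool`, with leaf labels in `L`.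
A *bare tree* is a `DTree n Unit`; a labeled decision tree is a `DTree n Bool`
(`true` encoding `+1` and `false` encoding `-1`). -/
inductive DTree (n : ℕ) (L : Type) : Type
  | leaf (label : L) : DTree n L
  | node (i : Fin n) (t0 t1 : DTree n L) : DTree n L

namespace DTree

variable {n : ℕ} {L : Type}

/-- The sequence of branching directions taken by the input `x` (root-to-leaf path). -/
def follow : DTree n L → (Fin n → Bool) → List Bool
  | .leaf _, _ => []
  | .node i t0 t1, x => x i :: (if x i then follow t1 x else follow t0 x)

/-- Addresses (root-to-leaf direction sequences) of all leaves of the tree. -/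
def leafAddrs : DTree n L → List (List Bool)
  | .leaf _ => [[]]
  | .node _ t0 t1 =>
      (leafAddrs t0).map (fun s => false :: s) ++ (leafAddrs t1).map (fun s => true :: s)

/-- Addresses of all internal nodes, together with the coordinate queried there. -/
def internals : DTree n L → List (List Bool × Fin n)
  | .leaf _ => []
  | .node i t0 t1 =>
      ([], i) :: ((internals t0).map (fun vj => (false :: vj.1, vj.2)) ++
        (internals t1).map (fun vj => (true :: vj.1, vj.2)))

/-- Addresses of all nodes (internal nodes and leaves). -/
def allAddrs : DTree n L → List (List Bool)
  | .leaf _ => [[]]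
  | .node _ t0 t1 =>
      [] :: ((allAddrs t0).map (fun s => false :: s) ++ (allAddrs t1).map (fun s => true :: s))

/-- The coordinates queried along the path with direction sequence `s`. -/
def pathCoords : DTree n L → List Bool → List (Fin n)
  | .leaf _, _ => []
  | .node _ _ _, [] => []
  | .node i t0 t1, b :: bs => i :: (if b then pathCoords t1 bs else pathCoords t0 bs)

/-- The substitution that fixes each coordinate queried along the path `s`
to the corresponding direction value. -/
def pathSubst : DTree n L → List Bool → (Fin n → Bool) → (Fin n → Bool)
  | .leaf _, _, x => x
  | .node _ _ _, [], x => x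
  | .node i t0 t1, b :: bs, x =>
      if b then pathSubst t1 bs (Function.update x i true)
      else pathSubst t0 bs (Function.update x i false)

/-- Depth: maximum leaf depth. -/
def depth : DTree n L → ℕ
  | .leaf _ => 0
  | .node _ t0 t1 => max (depth t0) (depth t1) + 1

/-- Evaluation of a labeled tree: the label of the leaf reached by `x`. -/
def eval : DTree n L → (Fin n → Bool) → L
  | .leaf b, _ => b
  | .node i t0 t1, x => if x i then eval t1 x else eval t0 x

/-- Replace the leaf at address `s` by an internal node querying coordinate `i`
(whose two children are leaves). -/
def splitAt : DTree n L → List Bool → Fin n → DTree n L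
  | .leaf l, [], i => .node i (.leaf l) (.leaf l)
  | .leaf l, _ :: _, _ => .leaf l
  | .node j t0 t1, [], _ => .node j t0 t1
  | .node j t0 t1, b :: bs, i =>
      if b then .node j t0 (splitAt t1 bs i) else .node j (splitAt t0 bs i) t1

/-- No coordinate is queried more than once on any root-to-leaf path. -/
def noRepeat : DTree n L → Prop
  | .leaf _ => True
  | .node i t0 t1 =>
      i ∉ (internals t0).map Prod.snd ∧ i ∉ (internals t1).map Prod.snd ∧
        noRepeat t0 ∧ noRepeat t1

end DTree

/-- The probability mass of the point `x` under the product distribution on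
`Fin n → Bool` in which coordinate `i` equals `true` with probability `p i`. -/
noncomputable def prMass {n : ℕ} (p : Fin n → ℝ) (x : Fin n → Bool) : ℝ :=
  ∏ i, if x i then p i else 1 - p i

open Classical in
/-- The probability of the event `E` under the product distribution with biases `p`. -/
noncomputable def prEvent {n : ℕ} (p : Fin n → ℝ) (E : (Fin n → Bool) → Prop) : ℝ :=
  ∑ x : Fin n → Bool, if E x then prMass p x else 0

/-- The influence of coordinate `i` on `f` under the product distribution with biases `p`:
`Pr[f x ≠ f x⁽ⁱ⁾]` where `x⁽ⁱ⁾` re-randomizes the `i`-th coordinate of `x`. -/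
noncomputable def infl {n : ℕ} (p : Fin n → ℝ) (i : Fin n) (f : (Fin n → Bool) → Bool) : ℝ :=
  ∑ x : Fin n → Bool, prMass p x *
    ((if f x ≠ f (Function.update x i true) then p i else 0) +
     (if f x ≠ f (Function.update x i false) then 1 - p i else 0))

/-- Total influence: the sum of the coordinate influences. -/
noncomputable def totalInf {n : ℕ} (p : Fin n → ℝ) (f : (Fin n → Bool) → Bool) : ℝ :=
  ∑ i, infl p i f

/-- Maximum coordinate influence. -/
noncomputable def maxInf {n : ℕ} (p : Fin n → ℝ) (f : (Fin n → Bool) → Bool) : ℝ :=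
  ⨆ i : Fin n, infl p i f

/-- Expectation of the `±1` value of `f` (with `true ↦ 1`, `false ↦ -1`). -/
noncomputable def expVal {n : ℕ} (p : Fin n → ℝ) (f : (Fin n → Bool) → Bool) : ℝ :=
  ∑ x : Fin n → Bool, prMass p x * (if f x then 1 else -1)

/-- Variance of the `±1`-valued function `f`: `1 - E[f]²`. -/
noncomputable def varOf {n : ℕ} (p : Fin n → ℝ) (f : (Fin n → Bool) → Bool) : ℝ :=
  1 - (expVal p f) ^ 2

/-- `error(f, ±1)`: the minority-value probability of `f`. -/
noncomputable def errOf {n : ℕ} (p : Fin n → ℝ) (f : (Fin n → Bool) → Bool) : ℝ :=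
  min (prEvent p (fun x => f x = false)) (prEvent p (fun x => f x = true))

/-- `p_v` for a leaf `v` with address `s`: the probability that a random input reaches it. -/
noncomputable def reachLeaf {n : ℕ} {L : Type} (p : Fin n → ℝ) (T : DTree n L)
    (s : List Bool) : ℝ :=
  prEvent p (fun x => T.follow x = s)

/-- `p_v` for an arbitrary node `v` with address `s`. -/
noncomputable def reachNode {n : ℕ} {L : Type} (p : Fin n → ℝ) (T : DTree n L)
    (s : List Bool) : ℝ :=
  prEvent p (fun x => s <+: T.follow x)

/-- The subfunction `f_v` at the node of `T` with address `s`: `f` with the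
coordinates queried on the path to `v` fixed to their path values. -/
def subFun {n : ℕ} {L : Type} (f : (Fin n → Bool) → Bool) (T : DTree n L)
    (s : List Bool) : (Fin n → Bool) → Bool :=
  fun x => f (T.pathSubst s x)

/-- Average depth `Δ(T) = Σ_{leaves v} p_v · depth(v)`. -/
noncomputable def avgDepth {n : ℕ} {L : Type} (p : Fin n → ℝ) (T : DTree n L) : ℝ :=
  ((T.leafAddrs).map (fun s => reachLeaf p T s * (s.length : ℝ))).sum

/-- `Score(v) = p_v · max_i Inf_i(f_v)` for a leaf `v` with address `s`. -/
noncomputable def score {n : ℕ} {L : Type} (p : Fin n → ℝ) (f : (Fin n → Bool) → Bool)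
    (T : DTree n L) (s : List Bool) : ℝ :=
  reachLeaf p T s * maxInf p (subFun f T s)

/-- `cost(T°) = Σ_{leaves v} p_v · Inf(f_v)`. -/
noncomputable def cost {n : ℕ} {L : Type} (p : Fin n → ℝ) (f : (Fin n → Bool) → Bool)
    (T : DTree n L) : ℝ :=
  ((T.leafAddrs).map (fun s => reachLeaf p T s * totalInf p (subFun f T s))).sum

/-- The error of the `f`-completion of a bare tree:
`error(T°, f) = Σ_{leaves v} p_v · error(f_v, ±1)`. -/
noncomputable def errTree {n : ℕ} {L : Type} (p : Fin n → ℝ) (f : (Fin n → Bool) → Bool)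
    (T : DTree n L) : ℝ :=
  ((T.leafAddrs).map (fun s => reachLeaf p T s * errOf p (subFun f T s))).sum


private lemma harmonic_ge_log (t : ℕ) :
    Real.log ((t : ℝ) + 1) ≤ ∑ j ∈ Finset.Icc 1 t, (1 / (j : ℝ)) := by
  induction t with
  | zero => simp
  | succ t ih =>
    rw [Finset.sum_Icc_succ_top (by omega)]
    have ht : (0:ℝ) < (t:ℝ) + 1 := by positivity
    have h1 : Real.log (((t:ℝ) + 1 + 1) / ((t:ℝ) + 1)) ≤ 1 / ((t:ℝ) + 1) := by
      have := Real.log_le_sub_one_of_pos (x := ((t:ℝ) + 1 + 1) / ((t:ℝ) + 1)) (by positivity)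
      have h2 : ((t:ℝ) + 1 + 1) / ((t:ℝ) + 1) - 1 = 1 / ((t:ℝ) + 1) := by
        field_simp
        ring
      linarith
    rw [Real.log_div (by positivity) (by positivity)] at h1
    push_cast
    linarith

private lemma prod_le_exp_aux (α : ℝ) (hα0 : 0 ≤ α) (hα1 : α ≤ 1) (t : ℕ) :
    ∏ j ∈ Finset.Icc 1 t, (1 - α / (j : ℝ)) ≤
      Real.exp (-α * ∑ j ∈ Finset.Icc 1 t, (1 / (j : ℝ))) := by
  have hrw : -α * ∑ j ∈ Finset.Icc 1 t, (1 / (j : ℝ))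
      = ∑ j ∈ Finset.Icc 1 t, (-(α / (j : ℝ))) := by
    rw [Finset.mul_sum]
    apply Finset.sum_congr rfl
    intro j _; ring
  rw [hrw, Real.exp_sum]
  apply Finset.prod_le_prod
  · intro j hj
    have hj1 : 1 ≤ j := (Finset.mem_Icc.mp hj).1
    have hjr : (1:ℝ) ≤ (j:ℝ) := by exact_mod_cast hj1
    have : α / (j:ℝ) ≤ 1 := by
      rw [div_le_one (by linarith)]; linarith
    linarith
  · intro j hj
    have := Real.add_one_le_exp (-(α / (j : ℝ)))
    linarith

/-- **Phase 1 recurrence.** Let `D, Δ ≥ 1`, `ε > 0`, and let `(C_j)_{j≥1}`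
be nonincreasing and nonnegative with `C_1 ≤ Δ` and
`C_{j+1} ≤ C_j·(1 − 1/(j·D·Δ))` whenever `C_j > ε·D`. Then `C_{t+1} ≤ ε·D` for every
integer `t ≥ max((Δ/(ε·D))^{D·Δ}, 1)`, and moreover `C_{t+1} ≤ Δ·t^{−1/(D·Δ)}` for every
integer `t ≥ 1` such that `C_1, …, C_t` all exceed `ε·D`. -/
theorem phase1_recurrence (D Δ ε : ℝ) (hD : 1 ≤ D) (hΔ : 1 ≤ Δ) (hε : 0 < ε)
    (C : ℕ → ℝ) (hnonneg : ∀ j, 0 ≤ C j) (hanti : ∀ j, C (j + 1) ≤ C j)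
    (h1 : C 1 ≤ Δ)
    (hrec : ∀ j : ℕ, 1 ≤ j → ε * D < C j →
      C (j + 1) ≤ C j * (1 - 1 / ((j : ℝ) * D * Δ))) :
    (∀ t : ℕ, max ((Δ / (ε * D)) ^ (D * Δ)) 1 ≤ (t : ℝ) → C (t + 1) ≤ ε * D) ∧
    (∀ t : ℕ, 1 ≤ t → (∀ j : ℕ, 1 ≤ j → j ≤ t → ε * D < C j) →
      C (t + 1) ≤ Δ * (t : ℝ) ^ (-(1 / (D * Δ)))) := by
  have hDΔpos : (0:ℝ) < D * Δ := by positivity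
  have hDΔ1 : (1:ℝ) ≤ D * Δ := by nlinarith
  set α : ℝ := 1 / (D * Δ) with hαdef
  have hα0 : 0 < α := by positivity
  have hα1 : α ≤ 1 := by
    rw [hαdef, div_le_one hDΔpos]; exact hDΔ1
  -- key inductive bound
  have key : ∀ t : ℕ, 1 ≤ t → (∀ j : ℕ, 1 ≤ j → j ≤ t → ε * D < C j) →
      C (t + 1) ≤ Δ * ∏ j ∈ Finset.Icc 1 t, (1 - α / (j : ℝ)) := by
    intro t ht hbig
    induction t, ht using Nat.le_induction with
    | base =>
      have h := hrec 1 le_rfl (hbig 1 le_rfl le_rfl)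
      push_cast at h
      have hfac : 1 - 1 / ((1:ℝ) * D * Δ) = 1 - α / 1 := by
        rw [hαdef]; ring_nf
      rw [hfac] at h
      have hfacnn : 0 ≤ 1 - α / 1 := by simp; linarith
      calc C 2 ≤ C 1 * (1 - α / 1) := h
        _ ≤ Δ * (1 - α / 1) := by
            apply mul_le_mul_of_nonneg_right h1 hfacnn
        _ = Δ * ∏ j ∈ Finset.Icc (1:ℕ) 1, (1 - α / (j : ℝ)) := by simp
    | succ t ht ih =>
      have hbig' : ∀ j : ℕ, 1 ≤ j → j ≤ t → ε * D < C j := fun j h1j h2j =>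
        hbig j h1j (by omega)
      have ihh := ih hbig'
      have hrecstep := hrec (t + 1) (by omega) (hbig (t + 1) (by omega) le_rfl)
      have hcast : 1 / (((t:ℝ) + 1) * D * Δ) = α / ((t:ℝ) + 1) := by
        rw [hαdef]
        field_simp
      have htr : (1:ℝ) ≤ (t:ℝ) + 1 := by
        have : (1:ℝ) ≤ (t:ℝ) := by exact_mod_cast ht
        linarith
      have hfacnn : 0 ≤ 1 - α / ((t:ℝ) + 1) := by
        have : α / ((t:ℝ) + 1) ≤ 1 := by
          rw [div_le_one (by linarith)]; linarith
        linarith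
      rw [Finset.prod_Icc_succ_top (by omega)]
      push_cast at hrecstep ⊢
      rw [hcast] at hrecstep
      calc C (t + 1 + 1) ≤ C (t + 1) * (1 - α / ((t:ℝ) + 1)) := hrecstep
        _ ≤ (Δ * ∏ j ∈ Finset.Icc 1 t, (1 - α / (j : ℝ))) * (1 - α / ((t:ℝ) + 1)) :=
            mul_le_mul_of_nonneg_right ihh hfacnn
        _ = Δ * ((∏ j ∈ Finset.Icc 1 t, (1 - α / (j : ℝ))) * (1 - α / ((t:ℝ) + 1))) := by
            ring
  -- part 2 with rpow
  have part2 : ∀ t : ℕ, 1 ≤ t → (∀ j : ℕ, 1 ≤ j → j ≤ t → ε * D < C j) →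
      C (t + 1) ≤ Δ * (t : ℝ) ^ (-(1 / (D * Δ))) := by
    intro t ht hbig
    have htr : (1:ℝ) ≤ (t:ℝ) := by exact_mod_cast ht
    have htpos : (0:ℝ) < (t:ℝ) := by linarith
    have h1' := key t ht hbig
    have h2' := prod_le_exp_aux α hα0.le hα1 t
    have hlog : Real.log (t:ℝ) ≤ ∑ j ∈ Finset.Icc 1 t, (1 / (j : ℝ)) := by
      have := harmonic_ge_log t
      have : Real.log (t:ℝ) ≤ Real.log ((t:ℝ) + 1) :=
        Real.log_le_log htpos (by linarith)
      linarith [harmonic_ge_log t]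
    have h3' : Real.exp (-α * ∑ j ∈ Finset.Icc 1 t, (1 / (j : ℝ)))
        ≤ Real.exp (-α * Real.log (t:ℝ)) := by
      apply Real.exp_le_exp.mpr
      have := mul_le_mul_of_nonneg_left hlog hα0.le
      nlinarith
    have hrpow : Real.exp (-α * Real.log (t:ℝ)) = (t:ℝ) ^ (-(1 / (D * Δ))) := by
      rw [Real.rpow_def_of_pos htpos, hαdef]
      ring_nf
    have hΔ0 : (0:ℝ) ≤ Δ := by linarith
    calc C (t + 1) ≤ Δ * ∏ j ∈ Finset.Icc 1 t, (1 - α / (j : ℝ)) := h1'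
      _ ≤ Δ * Real.exp (-α * ∑ j ∈ Finset.Icc 1 t, (1 / (j : ℝ))) :=
          mul_le_mul_of_nonneg_left h2' hΔ0
      _ ≤ Δ * Real.exp (-α * Real.log (t:ℝ)) := mul_le_mul_of_nonneg_left h3' hΔ0
      _ = Δ * (t:ℝ) ^ (-(1 / (D * Δ))) := by rw [hrpow]
  refine ⟨?_, part2⟩
  intro t ht
  have hεD : (0:ℝ) < ε * D := by positivity
  have ht1r : (1:ℝ) ≤ (t:ℝ) := le_trans (le_max_right _ _) ht
  have ht1 : 1 ≤ t := by exact_mod_cast ht1r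
  have htpos : (0:ℝ) < (t:ℝ) := by linarith
  by_contra hcon
  push_neg at hcon
  have hmono : ∀ a b : ℕ, a ≤ b → C b ≤ C a := fun a b hab =>
    antitone_nat_of_succ_le hanti hab
  have hbig : ∀ j : ℕ, 1 ≤ j → j ≤ t → ε * D < C j := by
    intro j hj1 hjt
    exact lt_of_lt_of_le hcon (hmono j (t + 1) (by omega))
  have h2 := part2 t ht1 hbig
  -- now show Δ * t^(-α) ≤ ε * D
  have hbase : (0:ℝ) ≤ Δ / (ε * D) := by positivity
  have hpow := Real.rpow_le_rpow (Real.rpow_nonneg hbase _) (le_trans (le_max_left _ _) ht) hα0.le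
  rw [← Real.rpow_mul hbase] at hpow
  have hmul : D * Δ * α = 1 := by
    rw [hαdef]; field_simp
  rw [hmul, Real.rpow_one] at hpow
  -- hpow : Δ / (ε * D) ≤ t ^ α
  have htα : (0:ℝ) < (t:ℝ) ^ α := Real.rpow_pos_of_pos htpos _
  have hneg : (t:ℝ) ^ (-(1 / (D * Δ))) = ((t:ℝ) ^ α)⁻¹ := by
    rw [hαdef, ← Real.rpow_neg htpos.le]
  have hfinal : Δ * (t:ℝ) ^ (-(1 / (D * Δ))) ≤ ε * D := by
    rw [hneg, mul_inv_le_iff₀ htα]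
    rw [div_le_iff₀ hεD] at hpow
    linarith
  linarith
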